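/- For every α > 0 there exists a constant c > 0 such that the following holds for every integer n ≥ 4: set R = α·n^{1/3} and h = α·n^{−1/6}; then for every set A of n points in ℝ³ whose pairwise Euclidean distances are all at least 1 and which is contained in the closed ball of radius R centered at the origin, the set 𝒮_A = {(v, c) ∈ S² × ℝ³ : ‖c‖ ≤ 2R and Cap(c, v) ∩ A ≠ ∅} satisfies μ(𝒮_A) ≥ c · μ(S² × {c ∈ ℝ³ : ‖c‖ ≤ 2R}) = c · 4π · (32/3)πR³. -/

import Mathlib

open scoped RealInnerProductSpace
open Real MeasureTheory Metric

noncomputable def capParamMeasure :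
    Measure (sphere (0 : EuclideanSpace ℝ (Fin 3)) 1 × EuclideanSpace ℝ (Fin 3)) :=
  ((volume : Measure (EuclideanSpace ℝ (Fin 3))).toSphere).prod volume

def capParams (R h : ℝ) (a : EuclideanSpace ℝ (Fin 3)) :
    Set (sphere (0 : EuclideanSpace ℝ (Fin 3)) 1 × EuclideanSpace ℝ (Fin 3)) :=
  {p | ‖a - p.2‖ ≤ R ∧ R - h ≤ ⟪a - p.2, (p.1 : EuclideanSpace ℝ (Fin 3))⟫}

open scoped ENNReal Pointwise

abbrev E3 := EuclideanSpace ℝ (Fin 3)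
abbrev Sph := sphere (0 : E3) 1
noncomputable abbrev σS : Measure Sph := (volume : Measure E3).toSphere
noncomputable instance : DecidableEq E3 := Classical.decEq _

lemma abs_coord_le_norm (z : E3) (i : Fin 3) : |z i| ≤ ‖z‖ := by
  rw [EuclideanSpace.norm_eq, ← Real.sqrt_sq_eq_abs]
  apply Real.sqrt_le_sqrt
  calc (z i)^2 = ‖z i‖^2 := by rw [Real.norm_eq_abs, sq_abs]
  _ ≤ ∑ j, ‖z j‖^2 :=
      Finset.single_le_sum (f := fun j => ‖z j‖^2) (fun j _ => sq_nonneg _) (Finset.mem_univ i)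

lemma norm_sq_eq (z : E3) : ‖z‖^2 = (z 0)^2 + (z 1)^2 + (z 2)^2 := by
  rw [EuclideanSpace.norm_eq, Real.sq_sqrt (by positivity)]
  simp [Fin.sum_univ_three, Real.norm_eq_abs, sq_abs]

lemma volume_box (I : Fin 3 → Set ℝ) (hI : ∀ i, MeasurableSet (I i)) :
    volume {z : E3 | ∀ i, z i ∈ I i} = ∏ i, volume (I i) := by
  have h := (EuclideanSpace.volume_preserving_symm_measurableEquiv_toLp (Fin 3))
  have : {z : E3 | ∀ i, z i ∈ I i}
      = (MeasurableEquiv.toLp 2 (Fin 3 → ℝ)).symm ⁻¹' (Set.univ.pi I) := by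
    ext z; simp [Set.mem_pi]
  rw [this, h.measure_preimage (MeasurableSet.univ_pi hI).nullMeasurableSet, volume_pi_pi]

def capStd (R h : ℝ) : Set E3 := {z : E3 | ‖z‖ ≤ R ∧ R - h ≤ z 0}

lemma continuous_coord (i : Fin 3) : Continuous (fun z : E3 => z i) :=
  (EuclideanSpace.proj (i : Fin 3) : E3 →L[ℝ] ℝ).continuous

lemma capStd_closed (R h : ℝ) : IsClosed (capStd R h) :=
  (isClosed_le continuous_norm continuous_const).inter
    (isClosed_le continuous_const (continuous_coord 0))

lemma capStd_measurable (R h : ℝ) : MeasurableSet (capStd R h) :=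
  (capStd_closed R h).measurableSet

lemma sq_le_of_mem_Icc {x s : ℝ} (hx : x ∈ Set.Icc (-s) s) : x^2 ≤ s^2 := by
  rcases hx with ⟨h1, h2⟩; nlinarith

lemma mem_Icc_of_sq_le {x s : ℝ} (hs : 0 ≤ s) (h : x^2 ≤ s^2) : x ∈ Set.Icc (-s) s := by
  have habs : |x| ≤ s := by nlinarith [sq_abs x, abs_nonneg x]
  exact ⟨neg_le_of_neg_le (by nlinarith [neg_abs_le x]), le_trans (le_abs_self x) habs⟩

lemma capStd_volume_upper (R h : ℝ) (h0 : 0 < h) (hhR : h ≤ R) :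
    volume (capStd R h) ≤ ENNReal.ofReal (8 * R * h^2) := by
  have hR : 0 < R := lt_of_lt_of_le h0 hhR
  set s := Real.sqrt (2*R*h) with hs
  have hs0 : 0 ≤ s := Real.sqrt_nonneg _
  have hs2 : s^2 = 2*R*h := Real.sq_sqrt (by positivity)
  have hsub : capStd R h ⊆ {z : E3 | ∀ i, z i ∈
      (if i = 0 then Set.Icc (R-h) R else Set.Icc (-s) s)} := by
    rintro z ⟨hz1, hz2⟩ i
    have hzn : ‖z‖^2 ≤ R^2 := by nlinarith [norm_nonneg z]
    have h1 : (z 0)^2 + (z 1)^2 + (z 2)^2 ≤ R^2 := by rw [← norm_sq_eq]; exact hzn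
    have hz0' : z 0 ≤ R := le_trans (le_trans (le_abs_self _) (abs_coord_le_norm z 0)) hz1
    have h2 : (R-h)^2 ≤ (z 0)^2 := by nlinarith
    rcases eq_or_ne i 0 with rfl | hi
    · rw [if_pos rfl]; exact ⟨hz2, hz0'⟩
    · rw [if_neg hi]
      apply mem_Icc_of_sq_le hs0
      have : (z i)^2 ≤ (z 1)^2 + (z 2)^2 := by
        fin_cases i
        · exact absurd rfl hi
        · show (z 1)^2 ≤ _; nlinarith [sq_nonneg (z 2)]
        · show (z 2)^2 ≤ _; nlinarith [sq_nonneg (z 1)]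
      nlinarith
  calc volume (capStd R h) ≤ _ := measure_mono hsub
  _ = ∏ i, volume (if i = 0 then Set.Icc (R-h) R else Set.Icc (-s) s) :=
      volume_box _ (fun i => by split <;> exact measurableSet_Icc)
  _ = ENNReal.ofReal (8*R*h^2) := by
      rw [Fin.prod_univ_three, if_pos rfl, if_neg (by decide : (1:Fin 3) ≠ 0),
        if_neg (by decide : (2:Fin 3) ≠ 0)]
      rw [Real.volume_Icc, Real.volume_Icc, ← ENNReal.ofReal_mul (by linarith),
        ← ENNReal.ofReal_mul (by nlinarith)]
      congr 1
      have : R - (R - h) = h := by ring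
      rw [this]
      nlinarith [hs2]

lemma exists_onb (v : E3) (hv : ‖v‖ = 1) :
    ∃ b : OrthonormalBasis (Fin 3) ℝ E3, b 0 = v := by
  have hcard : Module.finrank ℝ E3 = Fintype.card (Fin 3) := by simp
  have horth : Orthonormal ℝ (Set.restrict ({0} : Set (Fin 3)) (fun _ : Fin 3 => v)) := by
    constructor
    · intro i; exact hv
    · intro i j hij
      exact absurd (Subtype.ext (by
        have hi := i.2; have hj := j.2
        simp only [Set.mem_singleton_iff] at hi hj
        rw [hi, hj])) hij
  obtain ⟨b, hb⟩ := horth.exists_orthonormalBasis_extension_of_card_eq hcard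
  exact ⟨b, hb 0 rfl⟩

lemma box_measurable (I : Fin 3 → Set ℝ) (hI : ∀ i, MeasurableSet (I i)) :
    MeasurableSet {z : E3 | ∀ i, z i ∈ I i} := by
  have : {z : E3 | ∀ i, z i ∈ I i}
      = (MeasurableEquiv.toLp 2 (Fin 3 → ℝ)).symm ⁻¹' (Set.univ.pi I) := by
    ext z; simp [Set.mem_pi]
  rw [this]
  exact (MeasurableEquiv.toLp 2 (Fin 3 → ℝ)).symm.measurable (MeasurableSet.univ_pi hI)

lemma band_closed (w : E3) (h : ℝ) : IsClosed {v : Sph | |⟪w, (v : E3)⟫| ≤ h} :=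
  isClosed_le (continuous_const.inner continuous_subtype_val).abs continuous_const

lemma band_measure_le (w : E3) (h : ℝ) (hw : w ≠ 0) (hh : 0 ≤ h) :
    σS {v : Sph | |⟪w, (v : E3)⟫| ≤ h} ≤ ENNReal.ofReal (24 * h / ‖w‖) := by
  set d := ‖w‖ with hd
  have hd0 : 0 < d := norm_pos_iff.mpr hw
  set u : E3 := d⁻¹ • w with hu
  have hu1 : ‖u‖ = 1 := by
    rw [hu, norm_smul, norm_inv, norm_norm, ← hd, inv_mul_cancel₀ (ne_of_gt hd0)]
  obtain ⟨b, hb⟩ := exists_onb u hu1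
  have hmeas := (band_closed w h).measurableSet
  rw [Measure.toSphere_apply' _ hmeas]
  -- the cone set is contained in a slab
  have hsub : (Set.Ioo (0:ℝ) 1 • (Subtype.val '' {v : Sph | |⟪w, (v : E3)⟫| ≤ h}))
      ⊆ b.repr ⁻¹' {z : E3 | ∀ i, z i ∈
        (if i = 0 then Set.Icc (-(h/d)) (h/d) else Set.Icc (-1) 1)} := by
    intro x hx
    obtain ⟨t, ht, y, hy, rfl⟩ := Set.mem_smul.mp hx
    obtain ⟨v, hv, rfl⟩ := hy
    have hvn : ‖(v : E3)‖ = 1 := by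
      have := v.2; simpa [dist_eq_norm] using this
    have hxn : ‖t • (v : E3)‖ ≤ 1 := by
      rw [norm_smul, hvn, mul_one, Real.norm_eq_abs, abs_of_pos ht.1]
      exact le_of_lt ht.2
    have hinner : |⟪w, t • (v : E3)⟫| ≤ h := by
      rw [real_inner_smul_right, abs_mul, abs_of_pos ht.1]
      calc t * |⟪w, (v : E3)⟫| ≤ 1 * h := by
            apply mul_le_mul (le_of_lt ht.2) hv (abs_nonneg _) zero_le_one
      _ = h := one_mul h
    intro i
    rcases eq_or_ne i 0 with rfl | hi
    · rw [if_pos rfl]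
      have : b.repr (t • (v:E3)) 0 = ⟪u, t • (v:E3)⟫ := by
        rw [OrthonormalBasis.repr_apply_apply, hb]
      rw [Set.mem_Icc, this, hu, real_inner_smul_left]
      have habs : |d⁻¹ * ⟪w, t • (v:E3)⟫| ≤ d⁻¹ * h := by
        rw [abs_mul, abs_of_pos (inv_pos.mpr hd0)]
        exact mul_le_mul_of_nonneg_left hinner (le_of_lt (inv_pos.mpr hd0))
      have h1 := neg_abs_le (d⁻¹ * ⟪w, t • (v:E3)⟫)
      have h2 := le_abs_self (d⁻¹ * ⟪w, t • (v:E3)⟫)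
      rw [div_eq_inv_mul]
      constructor <;> linarith
    · rw [if_neg hi, Set.mem_Icc]
      have := abs_coord_le_norm (b.repr (t • (v:E3))) i
      rw [LinearIsometryEquiv.norm_map] at this
      have h3 : |b.repr (t • (v:E3)) i| ≤ 1 := le_trans this hxn
      exact abs_le.mp h3
  have hvol : volume (Set.Ioo (0:ℝ) 1 • (Subtype.val '' {v : Sph | |⟪w, (v : E3)⟫| ≤ h}))
      ≤ ENNReal.ofReal (8 * (h / d)) := by
    refine le_trans (measure_mono hsub) ?_
    rw [b.measurePreserving_repr.measure_preimage
      (box_measurable _ (fun i => by split <;> exact measurableSet_Icc)).nullMeasurableSet]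
    rw [volume_box _ (fun i => by split <;> exact measurableSet_Icc)]
    rw [Fin.prod_univ_three, if_pos rfl, if_neg (by decide : (1:Fin 3) ≠ 0),
      if_neg (by decide : (2:Fin 3) ≠ 0), Real.volume_Icc, Real.volume_Icc,
      ← ENNReal.ofReal_mul (by nlinarith [div_nonneg hh hd0.le]),
      ← ENNReal.ofReal_mul (by nlinarith [div_nonneg hh hd0.le])]
    apply ENNReal.ofReal_le_ofReal
    have : 0 ≤ h / d := by positivity
    nlinarith
  have hdim : (Module.finrank ℝ E3 : ℝ≥0∞) = 3 := by
    simp [finrank_euclideanSpace]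
  calc (Module.finrank ℝ E3 : ℝ≥0∞) *
      volume (Set.Ioo (0:ℝ) 1 • (Subtype.val '' {v : Sph | |⟪w, (v : E3)⟫| ≤ h}))
      ≤ 3 * ENNReal.ofReal (8 * (h / d)) := by
        rw [hdim]; exact mul_le_mul_right hvol 3
  _ = ENNReal.ofReal (24 * h / d) := by
      rw [show (3:ℝ≥0∞) = ENNReal.ofReal 3 from by simp, ← ENNReal.ofReal_mul (by norm_num)]
      congr 1
      ring

lemma capStd_volume_lower (R h : ℝ) (h0 : 0 < h) (hhR : h ≤ R) :
    ENNReal.ofReal (3/4 * R * h^2) ≤ volume (capStd R h) := by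
  have hR : 0 < R := lt_of_lt_of_le h0 hhR
  set t := Real.sqrt (3/8*R*h) with ht
  have ht0 : 0 ≤ t := Real.sqrt_nonneg _
  have ht2 : t^2 = 3/8*R*h := Real.sq_sqrt (by positivity)
  have hsub : {z : E3 | ∀ i, z i ∈
      (if i = 0 then Set.Icc (R-h) (R-h/2) else Set.Icc (-t) t)} ⊆ capStd R h := by
    intro z hz
    have hz0 := hz 0; rw [if_pos rfl] at hz0
    have hz1 := hz 1; rw [if_neg (by decide : (1:Fin 3) ≠ 0)] at hz1
    have hz2 := hz 2; rw [if_neg (by decide : (2:Fin 3) ≠ 0)] at hz2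
    have h1 : (z 1)^2 ≤ t^2 := sq_le_of_mem_Icc hz1
    have h2 : (z 2)^2 ≤ t^2 := sq_le_of_mem_Icc hz2
    have h00 : (z 0)^2 ≤ (R-h/2)^2 := by
      rcases hz0 with ⟨ha, hb⟩; nlinarith
    have hn2 : ‖z‖^2 ≤ R^2 := by rw [norm_sq_eq]; nlinarith
    exact ⟨by nlinarith [norm_nonneg z], hz0.1⟩
  calc ENNReal.ofReal (3/4*R*h^2)
      = ∏ i : Fin 3, volume (if i = 0 then Set.Icc (R-h) (R-h/2) else Set.Icc (-t) t) := by
        rw [Fin.prod_univ_three, if_pos rfl, if_neg (by decide : (1:Fin 3) ≠ 0),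
          if_neg (by decide : (2:Fin 3) ≠ 0), Real.volume_Icc, Real.volume_Icc,
          ← ENNReal.ofReal_mul (by linarith), ← ENNReal.ofReal_mul (by nlinarith)]
        congr 1
        nlinarith [ht2]
  _ ≤ volume (capStd R h) := by
        rw [← volume_box _ (fun i => by split <;> exact measurableSet_Icc)]
        exact measure_mono hsub

lemma slice_volume (R h : ℝ) (a v : E3) (hv : ‖v‖ = 1) :
    volume {x : E3 | ‖a - x‖ ≤ R ∧ R - h ≤ ⟪a - x, v⟫} = volume (capStd R h) := by
  obtain ⟨b, hb⟩ := exists_onb v hv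
  have hmp : MeasurePreserving (fun x : E3 => b.repr (a - x)) volume volume :=
    b.measurePreserving_repr.comp
      ((measurePreserving_add_left volume a).comp (Measure.measurePreserving_neg volume))
  have hset : {x : E3 | ‖a - x‖ ≤ R ∧ R - h ≤ ⟪a - x, v⟫}
      = (fun x : E3 => b.repr (a - x)) ⁻¹' capStd R h := by
    ext x
    simp only [Set.mem_setOf_eq, Set.mem_preimage, capStd, LinearIsometryEquiv.norm_map]
    rw [OrthonormalBasis.repr_apply_apply, hb, real_inner_comm]
  rw [hset, hmp.measure_preimage (capStd_measurable R h).nullMeasurableSet]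

lemma capParams_closed (R h : ℝ) (a : E3) : IsClosed (capParams R h a) := by
  have hsnd : Continuous fun p : Sph × E3 => a - p.2 :=
    continuous_const.sub continuous_snd
  have hfst : Continuous fun p : Sph × E3 => (p.1 : E3) :=
    continuous_subtype_val.comp continuous_fst
  have hEq : capParams R h a = {p : Sph × E3 | ‖a - p.2‖ ≤ R} ∩
      {p : Sph × E3 | R - h ≤ ⟪a - p.2, (p.1 : E3)⟫} := rfl
  rw [hEq]
  exact (isClosed_le hsnd.norm continuous_const).inter
    (isClosed_le continuous_const (hsnd.inner hfst))

lemma capParams_measurable (R h : ℝ) (a : E3) : MeasurableSet (capParams R h a) :=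
  (capParams_closed R h a).measurableSet

lemma norm_unit (v : Sph) : ‖(v : E3)‖ = 1 := by
  have := v.2
  simpa [dist_eq_norm] using this

lemma capParams_measure (R h : ℝ) (a : E3) :
    capParamMeasure (capParams R h a) = σS Set.univ * volume (capStd R h) := by
  rw [capParamMeasure, Measure.prod_apply (capParams_measurable R h a)]
  have : ∀ v : Sph, volume (Prod.mk v ⁻¹' capParams R h a) = volume (capStd R h) := by
    intro v
    exact slice_volume R h a v (norm_unit v)
  rw [lintegral_congr this, lintegral_const]
  ring

lemma packing (s : Finset E3) (hsep : ∀ x ∈ s, ∀ y ∈ s, x ≠ y → 1 ≤ dist x y)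
    (a : E3) (k : ℕ) (hk : 1 ≤ k)
    (hshell : ∀ b ∈ s, (k:ℝ) ≤ dist a b ∧ dist a b < k+1) :
    (s.card : ℝ) ≤ 124 * (k:ℝ)^2 := by
  set c₀ : ℝ := Real.sqrt π ^ 3 / Real.Gamma ((5:ℝ) / 2) with hc0
  have hc₀ : 0 < c₀ := by
    apply div_pos (pow_pos (Real.sqrt_pos.mpr Real.pi_pos) 3)
      (Real.Gamma_pos_of_pos (by norm_num))
  have hvol : ∀ (x : E3) (r : ℝ), 0 ≤ r → volume (ball x r) = ENNReal.ofReal (r^3 * c₀) := by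
    intro x r hr
    rw [EuclideanSpace.volume_ball, Fintype.card_fin, ENNReal.ofReal_mul (by positivity),
      ENNReal.ofReal_pow hr, hc0]
    norm_num
  have hvolc : ∀ (x : E3) (r : ℝ), 0 ≤ r →
      volume (closedBall x r) = ENNReal.ofReal (r^3 * c₀) := by
    intro x r hr
    rw [EuclideanSpace.volume_closedBall, Fintype.card_fin, ENNReal.ofReal_mul (by positivity),
      ENNReal.ofReal_pow hr, hc0]
    norm_num
  have hk1 : (1:ℝ) ≤ (k:ℝ) := by exact_mod_cast hk
  -- disjoint balls
  have hdisj : (↑s : Set E3).PairwiseDisjoint (fun b => ball b (1/2)) := by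
    intro x hx y hy hxy
    exact ball_disjoint_ball (by
      have := hsep x hx y hy hxy; linarith)
  have hunion := measure_biUnion_finset (μ := (volume : Measure E3)) hdisj (fun b _ => measurableSet_ball)
  -- the union of small balls is disjoint from the inner ball and inside the big ball
  have hdisj2 : Disjoint (ball a ((k:ℝ) - 1/2)) (⋃ b ∈ s, ball b (1/2)) := by
    rw [Set.disjoint_iUnion_right]
    intro b
    rw [Set.disjoint_iUnion_right]
    intro hb
    apply ball_disjoint_ball
    have := (hshell b hb).1; linarith
  have hsub : ball a ((k:ℝ) - 1/2) ∪ (⋃ b ∈ s, ball b (1/2)) ⊆ closedBall a ((k:ℝ) + 3/2) := by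
    apply Set.union_subset
    · exact (ball_subset_closedBall).trans (closedBall_subset_closedBall (by linarith))
    · intro x hx
      simp only [Set.mem_iUnion] at hx
      obtain ⟨b, hb, hxb⟩ := hx
      have h1 : dist x b < 1/2 := mem_ball.mp hxb
      have h2 := (hshell b hb).2
      rw [mem_closedBall]
      calc dist x a ≤ dist x b + dist b a := dist_triangle x b a
      _ ≤ 1/2 + ((k:ℝ)+1) := by rw [dist_comm b a]; linarith
      _ ≤ (k:ℝ) + 3/2 := by linarith
  have hmeas : volume (ball a ((k:ℝ) - 1/2)) + volume (⋃ b ∈ s, ball b (1/2))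
      ≤ volume (closedBall a ((k:ℝ) + 3/2)) := by
    rw [← measure_union hdisj2 (Finset.measurableSet_biUnion s (fun b _ => measurableSet_ball))]
    exact measure_mono hsub
  rw [hunion] at hmeas
  have hsum : ∑ b ∈ s, volume (ball b (1/2)) = ENNReal.ofReal (s.card * ((1/2)^3 * c₀)) := by
    rw [Finset.sum_congr rfl (fun b _ => hvol b (1/2) (by norm_num))]
    rw [Finset.sum_const, nsmul_eq_mul, ← ENNReal.ofReal_natCast,
      ← ENNReal.ofReal_mul (by positivity)]
  rw [hsum, hvol a _ (by linarith), hvolc a _ (by linarith),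
    ← ENNReal.ofReal_add (mul_nonneg (pow_nonneg (by linarith) 3) hc₀.le) (by positivity)] at hmeas
  rw [ENNReal.ofReal_le_ofReal_iff (mul_nonneg (by positivity) hc₀.le)] at hmeas
  have hcard : (s.card : ℝ) * ((1/2)^3 * c₀) ≤ (((k:ℝ)+3/2)^3 - ((k:ℝ)-1/2)^3) * c₀ := by
    nlinarith
  have hcard' : (s.card:ℝ)*(1/8)*c₀ ≤ (((k:ℝ)+3/2)^3 - ((k:ℝ)-1/2)^3)*c₀ := by
    nlinarith [hcard]
  have h1 : (s.card:ℝ)*(1/8) ≤ ((k:ℝ)+3/2)^3 - ((k:ℝ)-1/2)^3 :=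
    le_of_mul_le_mul_right (by linarith [hcard']) hc₀
  nlinarith [h1, hk1]

lemma count_inv_dist (A : Finset E3) (hsep : ∀ x ∈ A, ∀ y ∈ A, x ≠ y → 1 ≤ dist x y)
    (a : E3) (ha : a ∈ A) (K : ℝ) (hK : 0 ≤ K) :
    ∑ b ∈ A.erase a, (if dist a b ≤ K then (dist a b)⁻¹ else 0) ≤ 124 * K^2 := by
  classical
  rw [Finset.sum_ite, Finset.sum_const_zero, add_zero]
  set S := (A.erase a).filter (fun b => dist a b ≤ K) with hS
  set M := ⌊K⌋₊ with hM
  have hd1 : ∀ b ∈ S, (1:ℝ) ≤ dist a b := by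
    intro b hb
    rw [hS, Finset.mem_filter, Finset.mem_erase] at hb
    exact hsep a ha b hb.1.2 (Ne.symm hb.1.1)
  have hmaps : ∀ b ∈ S, ⌊dist a b⌋₊ ∈ Finset.Icc 1 M := by
    intro b hb
    rw [Finset.mem_Icc]
    constructor
    · exact Nat.le_floor (by exact_mod_cast hd1 b hb)
    · apply Nat.floor_mono
      rw [hS, Finset.mem_filter] at hb
      exact hb.2
  rw [← Finset.sum_fiberwise_of_maps_to hmaps (fun b => (dist a b)⁻¹)]
  have hbound : ∀ k ∈ Finset.Icc 1 M,
      (∑ b ∈ S.filter (fun b => ⌊dist a b⌋₊ = k), (dist a b)⁻¹) ≤ 124 * (M:ℝ) := by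
    intro k hk
    rw [Finset.mem_Icc] at hk
    have hk1 : 1 ≤ k := hk.1
    have hk0 : (0:ℝ) < k := by exact_mod_cast Nat.lt_of_lt_of_le Nat.zero_lt_one hk1
    set F := S.filter (fun b => ⌊dist a b⌋₊ = k) with hF
    have hshell : ∀ b ∈ F, (k:ℝ) ≤ dist a b ∧ dist a b < k+1 := by
      intro b hb
      rw [hF, Finset.mem_filter] at hb
      constructor
      · rw [← hb.2]; exact Nat.floor_le dist_nonneg
      · calc dist a b < ⌊dist a b⌋₊ + 1 := Nat.lt_floor_add_one _
        _ = (k:ℝ) + 1 := by rw [hb.2]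
    have hFsep : ∀ x ∈ F, ∀ y ∈ F, x ≠ y → 1 ≤ dist x y := by
      intro x hx y hy hxy
      rw [hF, Finset.mem_filter, hS, Finset.mem_filter, Finset.mem_erase] at hx hy
      exact hsep x hx.1.1.2 y hy.1.1.2 hxy
    have hcard := packing F hFsep a k hk1 hshell
    calc (∑ b ∈ F, (dist a b)⁻¹) ≤ F.card • (k:ℝ)⁻¹ := by
          apply Finset.sum_le_card_nsmul
          intro b hb
          exact inv_anti₀ hk0 (hshell b hb).1
    _ = (F.card : ℝ) * (k:ℝ)⁻¹ := by rw [nsmul_eq_mul]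
    _ ≤ (124 * (k:ℝ)^2) * (k:ℝ)⁻¹ := by
          apply mul_le_mul_of_nonneg_right hcard (by positivity)
    _ = 124 * (k:ℝ) := by field_simp
    _ ≤ 124 * (M:ℝ) := by
          have : (k:ℝ) ≤ (M:ℝ) := by exact_mod_cast hk.2
          linarith
  calc (∑ k ∈ Finset.Icc 1 M, ∑ b ∈ S.filter (fun b => ⌊dist a b⌋₊ = k), (dist a b)⁻¹)
      ≤ (Finset.Icc 1 M).card • (124 * (M:ℝ)) := Finset.sum_le_card_nsmul _ _ _ hbound
  _ = ((Finset.Icc 1 M).card : ℝ) * (124 * M) := by rw [nsmul_eq_mul]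
  _ ≤ (M:ℝ) * (124 * M) := by
      apply mul_le_mul_of_nonneg_right _ (by positivity)
      rw [Nat.card_Icc]
      simp
  _ ≤ 124 * K^2 := by
      have hMK : (M:ℝ) ≤ K := Nat.floor_le hK
      have hM0 : (0:ℝ) ≤ M := by positivity
      nlinarith

lemma pair_empty (R h : ℝ) (hR : 0 ≤ R) (hh : 0 ≤ h) (a b : E3)
    (hd : 2 * Real.sqrt (2*R*h) < dist a b) :
    capParams R h a ∩ capParams R h b = ∅ := by
  ext ⟨v, c⟩
  simp only [Set.mem_inter_iff, Set.mem_empty_iff_false, iff_false]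
  rintro ⟨⟨ha1, ha2⟩, ⟨hb1, hb2⟩⟩
  have hv1 : ‖(v : E3)‖ = 1 := norm_unit v
  have key : ∀ x : E3, ‖x‖ ≤ R → R - h ≤ ⟪x, (v:E3)⟫ → ‖x - R • (v:E3)‖ ≤ Real.sqrt (2*R*h) := by
    intro x hx1 hx2
    have hsq : ‖x - R • (v:E3)‖^2 ≤ 2*R*h := by
      rw [norm_sub_sq_real, real_inner_smul_right, norm_smul, hv1, mul_one, Real.norm_eq_abs]
      have h1 : ‖x‖^2 ≤ R^2 := by nlinarith [norm_nonneg x]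
      have h2 : |R|^2 = R^2 := sq_abs R
      nlinarith
    rw [show Real.sqrt (2*R*h) = Real.sqrt (2*R*h) from rfl]
    have := Real.sqrt_le_sqrt hsq
    rwa [Real.sqrt_sq (norm_nonneg _)] at this
  have hA := key (a - c) ha1 ha2
  have hB := key (b - c) hb1 hb2
  have : dist a b ≤ 2 * Real.sqrt (2*R*h) := by
    have : a - b = (a - c - R • (v:E3)) - (b - c - R • (v:E3)) := by abel
    rw [dist_eq_norm, this]
    calc ‖(a - c - R • (v:E3)) - (b - c - R • (v:E3))‖
        ≤ ‖a - c - R • (v:E3)‖ + ‖b - c - R • (v:E3)‖ := norm_sub_le _ _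
    _ ≤ 2 * Real.sqrt (2*R*h) := by linarith
  linarith

lemma pair_bound (R h : ℝ) (h0 : 0 < h) (hhR : h ≤ R) (a b : E3) (hab : a ≠ b) :
    capParamMeasure (capParams R h a ∩ capParams R h b)
      ≤ ENNReal.ofReal (192 * R * h^3 / dist a b) := by
  have hd0 : 0 < dist a b := dist_pos.mpr hab
  have hw : a - b ≠ 0 := sub_ne_zero.mpr hab
  rw [capParamMeasure,
    Measure.prod_apply ((capParams_measurable R h a).inter (capParams_measurable R h b))]
  have hind : ∀ v : Sph, volume (Prod.mk v ⁻¹' (capParams R h a ∩ capParams R h b))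
      ≤ Set.indicator {v : Sph | |⟪a - b, (v : E3)⟫| ≤ h}
          (fun _ => ENNReal.ofReal (8 * R * h^2)) v := by
    intro v
    by_cases hv : v ∈ {v : Sph | |⟪a - b, (v : E3)⟫| ≤ h}
    · rw [Set.indicator_of_mem hv]
      calc volume (Prod.mk v ⁻¹' (capParams R h a ∩ capParams R h b))
          ≤ volume (Prod.mk v ⁻¹' (capParams R h a)) :=
            measure_mono (Set.preimage_mono Set.inter_subset_left)
      _ = volume (capStd R h) := slice_volume R h a v (norm_unit v)
      _ ≤ ENNReal.ofReal (8 * R * h^2) := capStd_volume_upper R h h0 hhR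
    · rw [Set.indicator_of_notMem hv]
      have hempty : Prod.mk v ⁻¹' (capParams R h a ∩ capParams R h b) = ∅ := by
        ext x
        simp only [Set.mem_preimage, Set.mem_inter_iff, Set.mem_empty_iff_false, iff_false]
        rintro ⟨⟨ha1, ha2⟩, ⟨hb1, hb2⟩⟩
        apply hv
        have hv1 : ‖(v : E3)‖ = 1 := norm_unit v
        have hua : ⟪a - x, (v:E3)⟫ ≤ R := by
          calc ⟪a - x, (v:E3)⟫ ≤ ‖a - x‖ * ‖(v:E3)‖ := real_inner_le_norm _ _
          _ ≤ R := by rw [hv1, mul_one]; exact ha1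
        have hub : ⟪b - x, (v:E3)⟫ ≤ R := by
          calc ⟪b - x, (v:E3)⟫ ≤ ‖b - x‖ * ‖(v:E3)‖ := real_inner_le_norm _ _
          _ ≤ R := by rw [hv1, mul_one]; exact hb1
        have heq : ⟪a - b, (v:E3)⟫ = ⟪a - x, (v:E3)⟫ - ⟪b - x, (v:E3)⟫ := by
          rw [← inner_sub_left]
          congr 1
          abel
        show |⟪a - b, (v:E3)⟫| ≤ h
        rw [heq, abs_sub_le_iff]
        constructor <;> linarith
      rw [hempty]
      simp
  calc ∫⁻ v, volume (Prod.mk v ⁻¹' (capParams R h a ∩ capParams R h b)) ∂σS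
      ≤ ∫⁻ v, Set.indicator {v : Sph | |⟪a - b, (v : E3)⟫| ≤ h}
          (fun _ => ENNReal.ofReal (8 * R * h^2)) v ∂σS := lintegral_mono hind
  _ = ENNReal.ofReal (8 * R * h^2) * σS {v : Sph | |⟪a - b, (v : E3)⟫| ≤ h} := by
      rw [lintegral_indicator (band_closed (a-b) h).measurableSet, setLIntegral_const]
  _ ≤ ENNReal.ofReal (8 * R * h^2) * ENNReal.ofReal (24 * h / ‖a - b‖) :=
      mul_le_mul_right (band_measure_le (a-b) h hw (le_of_lt h0)) _
  _ = ENNReal.ofReal (192 * R * h^3 / dist a b) := by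
      have hR : 0 < R := lt_of_lt_of_le h0 hhR
      rw [← ENNReal.ofReal_mul (by positivity), dist_eq_norm]
      congr 1
      field_simp
      ring

lemma sphere_univ_eq : σS Set.univ = 3 * volume (ball (0:E3) 1) := by
  rw [Measure.toSphere_apply_univ]
  congr 1
  simp [finrank_euclideanSpace]

lemma sphere_univ_lower : ENNReal.ofReal 3 ≤ σS Set.univ := by
  rw [sphere_univ_eq]
  have hsub : {z : E3 | ∀ i, z i ∈ Set.Icc (-(1/2):ℝ) (1/2)} ⊆ ball (0:E3) 1 := by
    intro z hz
    rw [mem_ball, dist_zero_right]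
    have h0 := sq_le_of_mem_Icc (hz 0)
    have h1 := sq_le_of_mem_Icc (hz 1)
    have h2 := sq_le_of_mem_Icc (hz 2)
    nlinarith [norm_sq_eq z, norm_nonneg z]
  have hbox : ENNReal.ofReal 1 ≤ volume (ball (0:E3) 1) := by
    refine le_trans (le_of_eq ?_) (measure_mono hsub)
    rw [volume_box (fun _ => Set.Icc (-(1/2):ℝ) (1/2)) (fun _ => measurableSet_Icc)]
    rw [Fin.prod_univ_three, Real.volume_Icc]
    rw [← ENNReal.ofReal_mul (by norm_num), ← ENNReal.ofReal_mul (by norm_num)]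
    norm_num
  calc ENNReal.ofReal 3 = 3 * ENNReal.ofReal 1 := by simp
  _ ≤ 3 * volume (ball (0:E3) 1) := mul_le_mul_right hbox 3

lemma sphere_univ_upper : σS Set.univ ≤ ENNReal.ofReal 24 := by
  rw [sphere_univ_eq]
  have hsub : ball (0:E3) 1 ⊆ {z : E3 | ∀ i, z i ∈ Set.Icc (-1:ℝ) 1} := by
    intro z hz i
    rw [mem_ball, dist_zero_right] at hz
    have := abs_coord_le_norm z i
    exact ⟨by cases abs_le.mp (le_of_lt (lt_of_le_of_lt this hz)) with
      | intro l r => exact l, by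
        have := abs_le.mp (le_of_lt (lt_of_le_of_lt this hz)); exact this.2⟩
  have hbox : volume (ball (0:E3) 1) ≤ ENNReal.ofReal 8 := by
    refine le_trans (measure_mono hsub) (le_of_eq ?_)
    rw [volume_box (fun _ => Set.Icc (-1:ℝ) 1) (fun _ => measurableSet_Icc)]
    rw [Fin.prod_univ_three, Real.volume_Icc]
    rw [← ENNReal.ofReal_mul (by norm_num), ← ENNReal.ofReal_mul (by norm_num)]
    norm_num
  calc 3 * volume (ball (0:E3) 1) ≤ 3 * ENNReal.ofReal 8 := mul_le_mul_right hbox 3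
  _ = ENNReal.ofReal 24 := by
      rw [show (3:ℝ≥0∞) = ENNReal.ofReal 3 from by simp, ← ENNReal.ofReal_mul (by norm_num)]
      norm_num

lemma indicator_mul_indicator {γ : Type*} (s t : Set γ) (p : γ) :
    s.indicator (1 : γ → ℝ≥0∞) p * t.indicator 1 p = (s ∩ t).indicator 1 p := by
  by_cases hs : p ∈ s <;> by_cases ht : p ∈ t <;>
    simp [hs, ht, Set.indicator_of_mem, Set.indicator_of_notMem, Set.mem_inter_iff]

theorem measure_nonempty_capParams_lower_bound :
    ∀ α : ℝ, 0 < α → ∃ c : ℝ, 0 < c ∧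
      ∀ n : ℕ, 4 ≤ n →
        ∀ A : Finset (EuclideanSpace ℝ (Fin 3)), A.card = n →
          (∀ a ∈ A, ∀ b ∈ A, a ≠ b → 1 ≤ dist a b) →
          (A : Set (EuclideanSpace ℝ (Fin 3))) ⊆
            closedBall (0 : EuclideanSpace ℝ (Fin 3)) (α * (n : ℝ) ^ ((1 : ℝ) / 3)) →
          ENNReal.ofReal
              (c * (4 * π) * (32 / 3 * π * (α * (n : ℝ) ^ ((1 : ℝ) / 3)) ^ 3)) ≤
            capParamMeasure
              {p : sphere (0 : EuclideanSpace ℝ (Fin 3)) 1 × EuclideanSpace ℝ (Fin 3) |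
                ‖p.2‖ ≤ 2 * (α * (n : ℝ) ^ ((1 : ℝ) / 3)) ∧
                ∃ a ∈ A,
                  p ∈ capParams (α * (n : ℝ) ^ ((1 : ℝ) / 3)) (α * (n : ℝ) ^ (-(1 : ℝ) / 6)) a} := by
  intro α hα
  set D : ℝ := 192*α^3 + 190464*α^6 with hD
  have hD0 : 0 < D := by positivity
  refine ⟨243*α^3/(2048*π^2*D), by positivity, ?_⟩
  intro n hn A hcard hsep hball
  set R : ℝ := α * (n:ℝ) ^ ((1:ℝ)/3) with hRdef
  set h : ℝ := α * (n:ℝ) ^ (-(1:ℝ)/6) with hhdef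
  have hn0 : (0:ℝ) < n := by positivity
  have hn1 : (1:ℝ) ≤ n := by exact_mod_cast le_trans (by norm_num) hn
  have hh0 : 0 < h := by positivity
  have hR0 : 0 < R := by positivity
  have hhR : h ≤ R := by
    apply mul_le_mul_of_nonneg_left _ (le_of_lt hα)
    exact Real.rpow_le_rpow_of_exponent_le hn1 (by norm_num)
  -- key power identities
  have hRh2 : R * h^2 = α^3 := by
    rw [hRdef, hhdef]
    rw [mul_pow, ← Real.rpow_natCast ((n:ℝ) ^ (-(1:ℝ)/6)) 2, ← Real.rpow_mul (le_of_lt hn0)]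
    rw [mul_mul_mul_comm, ← Real.rpow_add hn0]
    norm_num
    ring
  have hR3 : R^3 = α^3 * n := by
    rw [hRdef, mul_pow, ← Real.rpow_natCast ((n:ℝ) ^ ((1:ℝ)/3)) 3,
      ← Real.rpow_mul (le_of_lt hn0)]
    norm_num
  set K : ℝ := 2 * Real.sqrt (2*R*h) with hK
  have hK0 : 0 ≤ K := by positivity
  have hK2 : K^2 = 8*R*h := by
    rw [hK, mul_pow, Real.sq_sqrt (by positivity)]
    ring
  -- the union
  set U : Set (Sph × E3) := ⋃ a ∈ A, capParams R h a with hU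
  have hUmeas : MeasurableSet U :=
    Finset.measurableSet_biUnion A (fun a _ => capParams_measurable R h a)
  -- f = sum of indicators
  set f : Sph × E3 → ℝ≥0∞ := fun p => ∑ a ∈ A, (capParams R h a).indicator 1 p with hf
  have hmeas_ind : ∀ a : E3, Measurable ((capParams R h a).indicator (1 : Sph × E3 → ℝ≥0∞)) :=
    fun a => measurable_one.indicator (capParams_measurable R h a)
  have hfmeas : Measurable f := Finset.measurable_sum _ (fun a _ => hmeas_ind a)
  -- first moment
  have hI1 : ∫⁻ p, f p ∂capParamMeasure = ∑ a ∈ A, capParamMeasure (capParams R h a) := by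
    rw [hf, lintegral_finset_sum _ (fun a _ => hmeas_ind a)]
    exact Finset.sum_congr rfl (fun a _ =>
      lintegral_indicator_one (capParams_measurable R h a))
  have hI1low : ENNReal.ofReal ((9/4) * α^3 * n) ≤ ∫⁻ p, f p ∂capParamMeasure := by
    rw [hI1]
    have hone : ∀ a ∈ A, ENNReal.ofReal ((9/4) * α^3) ≤ capParamMeasure (capParams R h a) := by
      intro a _
      rw [capParams_measure]
      calc ENNReal.ofReal ((9/4) * α^3) = ENNReal.ofReal 3 * ENNReal.ofReal (3/4 * (R * h^2)) := by
            rw [← ENNReal.ofReal_mul (by norm_num), hRh2]; congr 1; ring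
      _ ≤ σS Set.univ * volume (capStd R h) := by
            apply mul_le_mul' sphere_univ_lower
            rw [show 3/4 * (R*h^2) = 3/4*R*h^2 by ring]
            exact capStd_volume_lower R h hh0 hhR
    calc ENNReal.ofReal ((9/4) * α^3 * n) = (n : ℝ≥0∞) * ENNReal.ofReal ((9/4)*α^3) := by
          rw [← ENNReal.ofReal_natCast n, ← ENNReal.ofReal_mul (by positivity)]
          congr 1; ring
    _ = A.card • ENNReal.ofReal ((9/4)*α^3) := by rw [hcard, nsmul_eq_mul]
    _ ≤ ∑ a ∈ A, capParamMeasure (capParams R h a) := Finset.card_nsmul_le_sum _ _ _ hone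
  -- second moment
  have hI2 : ∫⁻ p, (f p)^2 ∂capParamMeasure
      = ∑ a ∈ A, ∑ b ∈ A, capParamMeasure (capParams R h a ∩ capParams R h b) := by
    have : ∀ p, (f p)^2 = ∑ a ∈ A, ∑ b ∈ A,
        (capParams R h a ∩ capParams R h b).indicator 1 p := by
      intro p
      rw [sq, hf, Finset.sum_mul_sum]
      exact Finset.sum_congr rfl (fun a _ => Finset.sum_congr rfl (fun b _ =>
        indicator_mul_indicator _ _ _))
    simp_rw [this]
    rw [lintegral_finset_sum _ (fun a _ => Finset.measurable_sum _ (fun b _ =>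
      measurable_one.indicator ((capParams_measurable R h a).inter (capParams_measurable R h b))))]
    refine Finset.sum_congr rfl (fun a _ => ?_)
    rw [lintegral_finset_sum _ (fun b _ =>
      measurable_one.indicator ((capParams_measurable R h a).inter (capParams_measurable R h b)))]
    exact Finset.sum_congr rfl (fun b _ =>
      lintegral_indicator_one ((capParams_measurable R h a).inter (capParams_measurable R h b)))
  have hI2up : ∫⁻ p, (f p)^2 ∂capParamMeasure ≤ ENNReal.ofReal (n * D) := by
    rw [hI2]
    have hrowbound : ∀ a ∈ A, ∑ b ∈ A, capParamMeasure (capParams R h a ∩ capParams R h b)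
        ≤ ENNReal.ofReal D := by
      intro a ha
      rw [← Finset.add_sum_erase A _ ha]
      have hdiag : capParamMeasure (capParams R h a ∩ capParams R h a)
          ≤ ENNReal.ofReal (192 * α^3) := by
        rw [Set.inter_self, capParams_measure]
        calc σS Set.univ * volume (capStd R h)
            ≤ ENNReal.ofReal 24 * ENNReal.ofReal (8*R*h^2) :=
              mul_le_mul' sphere_univ_upper (capStd_volume_upper R h hh0 hhR)
        _ = ENNReal.ofReal (192 * α^3) := by
            rw [← ENNReal.ofReal_mul (by norm_num)]
            congr 1
            rw [show (24:ℝ) * (8*R*h^2) = 192*(R*h^2) by ring, hRh2]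
      have hoff : ∑ b ∈ A.erase a, capParamMeasure (capParams R h a ∩ capParams R h b)
          ≤ ENNReal.ofReal (190464 * α^6) := by
        have hterm : ∀ b ∈ A.erase a, capParamMeasure (capParams R h a ∩ capParams R h b)
            ≤ ENNReal.ofReal (192*R*h^3 * (if dist a b ≤ K then (dist a b)⁻¹ else 0)) := by
          intro b hb
          have hba : b ≠ a := Finset.ne_of_mem_erase hb
          by_cases hdK : dist a b ≤ K
          · rw [if_pos hdK]
            calc capParamMeasure (capParams R h a ∩ capParams R h b)
                ≤ ENNReal.ofReal (192 * R * h^3 / dist a b) :=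
                  pair_bound R h hh0 hhR a b (Ne.symm hba)
            _ = ENNReal.ofReal (192*R*h^3 * (dist a b)⁻¹) := by rw [div_eq_mul_inv]
          · rw [if_neg hdK]
            rw [pair_empty R h (le_of_lt hR0) (le_of_lt hh0) a b (by rw [← hK]; linarith)]
            simp
        calc ∑ b ∈ A.erase a, capParamMeasure (capParams R h a ∩ capParams R h b)
            ≤ ∑ b ∈ A.erase a, ENNReal.ofReal (192*R*h^3 *
                (if dist a b ≤ K then (dist a b)⁻¹ else 0)) := Finset.sum_le_sum hterm
        _ = ENNReal.ofReal (∑ b ∈ A.erase a, 192*R*h^3 *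
                (if dist a b ≤ K then (dist a b)⁻¹ else 0)) := by
              refine Eq.symm (ENNReal.ofReal_sum_of_nonneg ?_)
              intro b _
              have h0' : (0:ℝ) ≤ (if dist a b ≤ K then (dist a b)⁻¹ else 0) := by
                split
                · positivity
                · exact le_rfl
              exact mul_nonneg (by positivity) h0'
        _ ≤ ENNReal.ofReal (190464 * α^6) := by
              apply ENNReal.ofReal_le_ofReal
              rw [← Finset.mul_sum]
              have hcount := count_inv_dist A hsep a ha K hK0
              calc 192*R*h^3 * (∑ b ∈ A.erase a, (if dist a b ≤ K then (dist a b)⁻¹ else 0))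
                  ≤ 192*R*h^3 * (124 * K^2) := by
                    apply mul_le_mul_of_nonneg_left hcount (by positivity)
              _ = 190464 * α^6 := by
                    rw [hK2]
                    have : 192*R*h^3*(124*(8*R*h)) = 190464 * (R*h^2)^2 := by ring
                    rw [this, hRh2]
                    ring
      calc capParamMeasure (capParams R h a ∩ capParams R h a)
          + ∑ b ∈ A.erase a, capParamMeasure (capParams R h a ∩ capParams R h b)
          ≤ ENNReal.ofReal (192 * α^3) + ENNReal.ofReal (190464 * α^6) :=
            add_le_add hdiag hoff
      _ = ENNReal.ofReal D := by
          rw [← ENNReal.ofReal_add (by positivity) (by positivity), hD]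
    calc ∑ a ∈ A, ∑ b ∈ A, capParamMeasure (capParams R h a ∩ capParams R h b)
        ≤ A.card • ENNReal.ofReal D := Finset.sum_le_card_nsmul _ _ _ hrowbound
    _ = ENNReal.ofReal (n * D) := by
        rw [hcard, nsmul_eq_mul, ← ENNReal.ofReal_natCast n,
          ← ENNReal.ofReal_mul (by positivity)]
  -- Cauchy-Schwarz
  have hCS : (∫⁻ p, f p ∂capParamMeasure) * (∫⁻ p, f p ∂capParamMeasure)
      ≤ (∫⁻ p, (f p)^2 ∂capParamMeasure) * capParamMeasure U := by
    set g : Sph × E3 → ℝ≥0∞ := U.indicator 1 with hg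
    have hfg : ∀ p, f p = (f * g) p := by
      intro p
      by_cases hp : p ∈ U
      · simp [hg, Set.indicator_of_mem hp]
      · have hzero : f p = 0 := by
          rw [hf]
          apply Finset.sum_eq_zero
          intro a ha
          apply Set.indicator_of_notMem
          intro hmem
          exact hp (Set.mem_biUnion ha hmem)
        simp [hzero]
    have hconj : Real.HolderConjugate 2 2 := Real.HolderConjugate.two_two
    have hCS0 := ENNReal.lintegral_mul_le_Lp_mul_Lq capParamMeasure hconj
      hfmeas.aemeasurable ((measurable_one.indicator hUmeas)).aemeasurable
    rw [← lintegral_congr hfg] at hCS0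
    have hgpow : ∀ p, g p ^ (2:ℝ) = g p := by
      intro p
      by_cases hp : p ∈ U
      · simp [hg, Set.indicator_of_mem hp]
      · simp only [hg, Set.indicator_of_notMem hp]
        exact ENNReal.zero_rpow_of_pos (by norm_num)
    have hfpow : ∀ p, f p ^ (2:ℝ) = (f p)^2 := by
      intro p
      rw [← ENNReal.rpow_natCast (f p) 2]
      norm_num
    rw [hg] at hgpow
    simp_rw [hgpow, hfpow] at hCS0
    rw [lintegral_indicator_one hUmeas] at hCS0
    calc (∫⁻ p, f p ∂capParamMeasure) * (∫⁻ p, f p ∂capParamMeasure)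
        ≤ ((∫⁻ p, (f p)^2 ∂capParamMeasure) ^ (1/2:ℝ) * capParamMeasure U ^ (1/2:ℝ)) *
          ((∫⁻ p, (f p)^2 ∂capParamMeasure) ^ (1/2:ℝ) * capParamMeasure U ^ (1/2:ℝ)) :=
          mul_le_mul' hCS0 hCS0
    _ = ((∫⁻ p, (f p)^2 ∂capParamMeasure) ^ (1/2:ℝ) * (∫⁻ p, (f p)^2 ∂capParamMeasure) ^ (1/2:ℝ))
        * (capParamMeasure U ^ (1/2:ℝ) * capParamMeasure U ^ (1/2:ℝ)) := by ring
    _ = (∫⁻ p, (f p)^2 ∂capParamMeasure) * capParamMeasure U := by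
        rw [← ENNReal.rpow_add_of_nonneg _ _ (by norm_num : (0:ℝ) ≤ 1/2) (by norm_num : (0:ℝ) ≤ 1/2),
          ← ENNReal.rpow_add_of_nonneg _ _ (by norm_num : (0:ℝ) ≤ 1/2) (by norm_num : (0:ℝ) ≤ 1/2)]
        norm_num
  -- conclude
  have hU_le : capParamMeasure U ≤ capParamMeasure
      {p : Sph × E3 | ‖p.2‖ ≤ 2 * R ∧ ∃ a ∈ A, p ∈ capParams R h a} := by
    apply measure_mono
    intro p hp
    rw [hU] at hp
    simp only [Set.mem_iUnion] at hp
    obtain ⟨a, ha, hpa⟩ := hp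
    constructor
    · have h1 : ‖a - p.2‖ ≤ R := hpa.1
      have h2 : ‖a‖ ≤ R := by
        have := hball ha
        rwa [mem_closedBall, dist_zero_right] at this
      calc ‖p.2‖ = ‖a - (a - p.2)‖ := by congr 1; abel
      _ ≤ ‖a‖ + ‖a - p.2‖ := norm_sub_le _ _
      _ ≤ 2 * R := by linarith
    · exact ⟨a, ha, hpa⟩
  refine le_trans ?_ hU_le
  -- final numeric step
  set T : ℝ := 243*α^3/(2048*π^2*D) * (4 * π) * (32 / 3 * π * R ^ 3) with hT
  have hT0 : 0 ≤ T := by positivity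
  have hX0 : ENNReal.ofReal (n * D) ≠ 0 := by
    rw [ne_eq, ENNReal.ofReal_eq_zero, not_le]
    positivity
  have hXtop : ENNReal.ofReal (n * D) ≠ ⊤ := ENNReal.ofReal_ne_top
  rw [← ENNReal.mul_le_mul_iff_left hX0 hXtop]
  have hTnum : T * (n * D) ≤ ((9/4) * α^3 * n) * ((9/4) * α^3 * n) := by
    apply le_of_eq
    rw [hT, hR3]
    have hπ : π ≠ 0 := ne_of_gt Real.pi_pos
    have hDne : D ≠ 0 := ne_of_gt hD0
    field_simp
    ring
  calc ENNReal.ofReal T * ENNReal.ofReal (n * D)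
      = ENNReal.ofReal (T * (n * D)) := by rw [← ENNReal.ofReal_mul hT0]
  _ ≤ ENNReal.ofReal (((9/4) * α^3 * n) * ((9/4) * α^3 * n)) := ENNReal.ofReal_le_ofReal hTnum
  _ = ENNReal.ofReal ((9/4) * α^3 * n) * ENNReal.ofReal ((9/4) * α^3 * n) := by
      rw [← ENNReal.ofReal_mul (by positivity)]
  _ ≤ (∫⁻ p, f p ∂capParamMeasure) * (∫⁻ p, f p ∂capParamMeasure) :=
      mul_le_mul' hI1low hI1low
  _ ≤ (∫⁻ p, (f p)^2 ∂capParamMeasure) * capParamMeasure U := hCS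
  _ ≤ ENNReal.ofReal (n * D) * capParamMeasure U := mul_le_mul_left hI2up _
  _ = capParamMeasure U * ENNReal.ofReal (n * D) := mul_comm _ _
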